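/- (Equivalence of the s-rectangular max-min problem and its inverse formulation.) The optimal value of max_{d ∈ Δ^A} min{ Σ_{a ∈ A} d_a · q_a(ξ_a) : ξ ∈ ℝ^A, ξ ≥ 0, Σ_{a ∈ A} ξ_a ≤ κ } equals the optimal value of min{ u ∈ ℝ : Σ_{a ∈ A} q_a^{-1}(u) ≤ κ }. -/

import Mathlib

private lemma inf_attained' {α : Type*} [TopologicalSpace α] {s : Set α}
    (hs : IsCompact s) (hne : s.Nonempty) {f : α → ℝ} (hf : Continuous f) :
    ∃ x ∈ s, f x = sInf (f '' s) := by
  obtain ⟨x, hx, hmin⟩ := hs.exists_isMinOn hne hf.continuousOn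
  refine ⟨x, hx, le_antisymm ?_ ?_⟩
  · exact le_csInf (hne.image f) (by rintro _ ⟨y, hy, rfl⟩; exact hmin hy)
  · exact csInf_le (hs.image hf).bddBelow ⟨x, hx, rfl⟩

/-- Equivalence of the s-rectangular max-min problem and its inverse
formulation: the optimal value of
`max_{d ∈ Δ^A} min{ Σ_a d_a q_a(ξ_a) : ξ ≥ 0, Σ_a ξ_a ≤ κ }` equals the optimal
value of `min{ u : Σ_a q_a⁻¹(u) ≤ κ }` (where `q_a⁻¹(u) = +∞` when the feasible set
is empty, encoded by requiring each feasible set to be nonempty). -/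
theorem s_rectangular_maxmin_inverse_equivalence
    {S A : Type*} [Fintype S] [Nonempty S] [Fintype A] [Nonempty A]
    (z : A → S → ℝ) (pbar : A → S → ℝ) (hpbar : ∀ a, pbar a ∈ stdSimplex ℝ S)
    (w : A → S → ℝ) (hw : ∀ a i, 0 < w a i)
    (κ : ℝ) (hκ : 0 ≤ κ)
    (q : A → ℝ → ℝ)
    (hq : ∀ (a : A) (ξ : ℝ), q a ξ =
      sInf ((fun p : S → ℝ => ∑ i, z a i * p i) ''
        {p | p ∈ stdSimplex ℝ S ∧ ∑ i, w a i * |p i - pbar a i| ≤ ξ}))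
    (qinv : A → ℝ → ℝ)
    (hqinv : ∀ (a : A) (u : ℝ), qinv a u =
      sInf ((fun p : S → ℝ => ∑ i, w a i * |p i - pbar a i|) ''
        {p | p ∈ stdSimplex ℝ S ∧ ∑ i, z a i * p i ≤ u})) :
    sSup ((fun d : A → ℝ =>
        sInf ((fun ξ : A → ℝ => ∑ a, d a * q a (ξ a)) ''
          {ξ | (∀ a, 0 ≤ ξ a) ∧ ∑ a, ξ a ≤ κ})) '' stdSimplex ℝ A)
      = sInf {u : ℝ |
          (∀ a, ∃ p ∈ stdSimplex ℝ S, ∑ i, z a i * p i ≤ u) ∧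
          ∑ a, qinv a u ≤ κ} := by
  classical
  -- notation
  set lin : A → (S → ℝ) → ℝ := fun a p => ∑ i, z a i * p i with hlin_def
  set nrm : A → (S → ℝ) → ℝ := fun a p => ∑ i, w a i * |p i - pbar a i| with hnrm_def
  have hlincont : ∀ a, Continuous (lin a) := fun a =>
    continuous_finset_sum _ fun i _ => continuous_const.mul (continuous_apply i)
  have hnrmcont : ∀ a, Continuous (nrm a) := fun a =>
    continuous_finset_sum _ fun i _ => continuous_const.mul (((continuous_apply i).sub continuous_const).abs)
  have hnrm_nonneg : ∀ a p, 0 ≤ nrm a p := fun a p =>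
    Finset.sum_nonneg fun i _ => mul_nonneg (hw a i).le (abs_nonneg _)
  have hnrm_bar : ∀ a, nrm a (pbar a) = 0 := fun a => by simp [hnrm_def]
  -- compactness
  have hPc : ∀ a ξ, IsCompact {p | p ∈ stdSimplex ℝ S ∧ nrm a p ≤ ξ} := fun a ξ =>
    (isCompact_stdSimplex ℝ S).inter_right (isClosed_le (hnrmcont a) continuous_const)
  have hQc : ∀ a u, IsCompact {p | p ∈ stdSimplex ℝ S ∧ lin a p ≤ u} := fun a u =>
    (isCompact_stdSimplex ℝ S).inter_right (isClosed_le (hlincont a) continuous_const)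
  -- q facts
  have hq_le : ∀ a ξ p, p ∈ stdSimplex ℝ S → nrm a p ≤ ξ → q a ξ ≤ lin a p := by
    intro a ξ p h1 h2
    rw [hq a ξ]
    exact csInf_le ((hPc a ξ).image (hlincont a)).bddBelow ⟨p, ⟨h1, h2⟩, rfl⟩
  have hq_att : ∀ a ξ, 0 ≤ ξ →
      ∃ p, (p ∈ stdSimplex ℝ S ∧ nrm a p ≤ ξ) ∧ lin a p = q a ξ := by
    intro a ξ hξ
    obtain ⟨p, hp, hpe⟩ := inf_attained' (hPc a ξ)
      ⟨pbar a, hpbar a, by rw [hnrm_bar]; exact hξ⟩ (hlincont a)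
    exact ⟨p, hp, by rw [hpe, hq a ξ]⟩
  -- qinv facts
  have hqinv_le : ∀ a u p, p ∈ stdSimplex ℝ S → lin a p ≤ u → qinv a u ≤ nrm a p := by
    intro a u p h1 h2
    rw [hqinv a u]
    exact csInf_le ((hQc a u).image (hnrmcont a)).bddBelow ⟨p, ⟨h1, h2⟩, rfl⟩
  have hqinv_att : ∀ a u, (∃ p ∈ stdSimplex ℝ S, lin a p ≤ u) →
      ∃ p, (p ∈ stdSimplex ℝ S ∧ lin a p ≤ u) ∧ nrm a p = qinv a u := by
    intro a u hu
    obtain ⟨p0, hp0, hp0u⟩ := hu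
    obtain ⟨p, hp, hpe⟩ := inf_attained' (hQc a u) ⟨p0, hp0, hp0u⟩ (hnrmcont a)
    exact ⟨p, hp, by rw [hpe, hqinv a u]⟩
  have hqinv_nonneg : ∀ a u, (∃ p ∈ stdSimplex ℝ S, lin a p ≤ u) → 0 ≤ qinv a u := by
    intro a u hu
    obtain ⟨p, _, hpe⟩ := hqinv_att a u hu
    exact hpe ▸ hnrm_nonneg a p
  have h_q_qinv : ∀ a u, (∃ p ∈ stdSimplex ℝ S, lin a p ≤ u) → q a (qinv a u) ≤ u := by
    intro a u hu
    obtain ⟨p, ⟨hpΔ, hpu⟩, hpe⟩ := hqinv_att a u hu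
    exact le_trans (hq_le a _ p hpΔ hpe.le) hpu
  have h_qinv_q : ∀ a ξ, 0 ≤ ξ → qinv a (q a ξ) ≤ ξ := by
    intro a ξ hξ
    obtain ⟨p, ⟨hpΔ, hpn⟩, hpe⟩ := hq_att a ξ hξ
    exact le_trans (hqinv_le a _ p hpΔ hpe.le) hpn
  have hqinv_anti : ∀ a u v, u ≤ v → (∃ p ∈ stdSimplex ℝ S, lin a p ≤ u) →
      qinv a v ≤ qinv a u := by
    intro a u v huv hu
    obtain ⟨p, ⟨hpΔ, hpu⟩, hpe⟩ := hqinv_att a u hu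
    exact hpe ▸ hqinv_le a v p hpΔ (hpu.trans huv)
  -- lower bound on lin over simplex
  set B0 : ℝ := ∑ a, ∑ i, |z a i| with hB0_def
  have hlin_lb : ∀ a p, p ∈ stdSimplex ℝ S → -B0 ≤ lin a p := by
    intro a p hp
    have h1 : ∀ i, p i ≤ 1 := by
      intro i
      calc p i ≤ ∑ j, p j := Finset.single_le_sum (fun j _ => hp.1 j) (Finset.mem_univ i)
        _ = 1 := hp.2
    have h2 : -(∑ i, |z a i|) ≤ lin a p := by
      rw [← Finset.sum_neg_distrib]
      refine Finset.sum_le_sum fun i _ => ?_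
      rcases le_or_gt 0 (z a i) with hz | hz
      · exact le_trans (by linarith [abs_of_nonneg hz]) (mul_nonneg hz (hp.1 i))
      · rw [abs_of_neg hz]
        calc -(-z a i) = z a i * 1 := by ring
          _ ≤ z a i * p i := by nlinarith [hp.1 i, h1 i]
    refine le_trans ?_ h2
    have : (∑ i, |z a i|) ≤ B0 := by
      rw [hB0_def]
      exact Finset.single_le_sum
        (fun b _ => Finset.sum_nonneg fun i _ => abs_nonneg (z b i)) (Finset.mem_univ a)
    linarith
  have hq_lb : ∀ a ξ, 0 ≤ ξ → -B0 ≤ q a ξ := by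
    intro a ξ hξ
    obtain ⟨p, ⟨hpΔ, _⟩, hpe⟩ := hq_att a ξ hξ
    exact hpe ▸ hlin_lb a p hpΔ
  -- convexity of q
  have hq_cvx : ∀ a ξ η t s, 0 ≤ ξ → 0 ≤ η → 0 ≤ t → 0 ≤ s → t + s = 1 →
      q a (t * ξ + s * η) ≤ t * q a ξ + s * q a η := by
    intro a ξ η t s hξ hη ht hs hts
    obtain ⟨p1, ⟨hp1Δ, hp1n⟩, hp1e⟩ := hq_att a ξ hξ
    obtain ⟨p2, ⟨hp2Δ, hp2n⟩, hp2e⟩ := hq_att a η hη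
    have hpΔ : t • p1 + s • p2 ∈ stdSimplex ℝ S :=
      convex_stdSimplex ℝ S hp1Δ hp2Δ ht hs hts
    have hnb : nrm a (t • p1 + s • p2) ≤ t * ξ + s * η := by
      have : nrm a (t • p1 + s • p2) ≤ t * nrm a p1 + s * nrm a p2 := by
        rw [hnrm_def]
        simp only
        rw [Finset.mul_sum, Finset.mul_sum, ← Finset.sum_add_distrib]
        refine Finset.sum_le_sum fun i _ => ?_
        have habs : |(t • p1 + s • p2) i - pbar a i| ≤ t * |p1 i - pbar a i| + s * |p2 i - pbar a i| := by
          have : (t • p1 + s • p2) i - pbar a i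
              = t * (p1 i - pbar a i) + s * (p2 i - pbar a i) := by
            have hx : (t • p1 + s • p2) i = t * p1 i + s * p2 i := rfl
            rw [hx]; linear_combination (pbar a i) * hts
          rw [this]
          calc |t * (p1 i - pbar a i) + s * (p2 i - pbar a i)|
              ≤ |t * (p1 i - pbar a i)| + |s * (p2 i - pbar a i)| := abs_add_le _ _
            _ = t * |p1 i - pbar a i| + s * |p2 i - pbar a i| := by
                rw [abs_mul, abs_mul, abs_of_nonneg ht, abs_of_nonneg hs]
        calc w a i * |(t • p1 + s • p2) i - pbar a i|
            ≤ w a i * (t * |p1 i - pbar a i| + s * |p2 i - pbar a i|) :=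
              mul_le_mul_of_nonneg_left habs (hw a i).le
          _ = t * (w a i * |p1 i - pbar a i|) + s * (w a i * |p2 i - pbar a i|) := by ring
      refine le_trans this ?_
      have h1 : t * nrm a p1 ≤ t * ξ := mul_le_mul_of_nonneg_left hp1n ht
      have h2 : s * nrm a p2 ≤ s * η := mul_le_mul_of_nonneg_left hp2n hs
      linarith
    have hlineq : lin a (t • p1 + s • p2) = t * lin a p1 + s * lin a p2 := by
      rw [hlin_def]
      simp only
      rw [Finset.mul_sum, Finset.mul_sum, ← Finset.sum_add_distrib]
      exact Finset.sum_congr rfl fun i _ => by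
        simp [Pi.add_apply, Pi.smul_apply, smul_eq_mul]; ring
    calc q a (t * ξ + s * η) ≤ lin a (t • p1 + s • p2) := hq_le a _ _ hpΔ hnb
      _ = t * lin a p1 + s * lin a p2 := hlineq
      _ = t * q a ξ + s * q a η := by rw [hp1e, hp2e]
  -- The feasible set T and its properties
  set T : Set ℝ := {u : ℝ |
      (∀ a, ∃ p ∈ stdSimplex ℝ S, lin a p ≤ u) ∧ ∑ a, qinv a u ≤ κ} with hT_def
  set u0 : ℝ := ∑ a, |lin a (pbar a)| with hu0_def
  have hu0 : ∀ a, lin a (pbar a) ≤ u0 := by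
    intro a
    refine le_trans (le_abs_self _) ?_
    exact Finset.single_le_sum (fun b _ => abs_nonneg (lin b (pbar b))) (Finset.mem_univ a)
  have hu0T : u0 ∈ T := by
    constructor
    · exact fun a => ⟨pbar a, hpbar a, hu0 a⟩
    · have : ∀ a, qinv a u0 ≤ 0 := fun a => by
        have := hqinv_le a u0 (pbar a) (hpbar a) (hu0 a)
        rwa [hnrm_bar a] at this
      calc ∑ a, qinv a u0 ≤ ∑ _a : A, (0 : ℝ) := Finset.sum_le_sum fun a _ => this a
        _ = 0 := by simp
        _ ≤ κ := hκ
  have hTne : T.Nonempty := ⟨u0, hu0T⟩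
  have hTbdd : BddBelow T := by
    refine ⟨-B0, fun u hu => ?_⟩
    obtain ⟨p, hpΔ, hpu⟩ := hu.1 (Classical.arbitrary A)
    exact le_trans (hlin_lb _ p hpΔ) hpu
  set ustar : ℝ := sInf T with hustar_def
  -- the ξ-feasible set K
  set K : Set (A → ℝ) := {ξ | (∀ a, 0 ≤ ξ a) ∧ ∑ a, ξ a ≤ κ} with hK_def
  have hK0 : (0 : A → ℝ) ∈ K := ⟨fun a => le_refl 0, by simp [hκ]⟩
  -- core inequality: value at any d is ≤ any u ∈ T
  have hF_le : ∀ d ∈ stdSimplex ℝ A, ∀ u ∈ T,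
      sInf ((fun ξ : A → ℝ => ∑ a, d a * q a (ξ a)) '' K) ≤ u := by
    intro d hd u hu
    have hbdd : BddBelow ((fun ξ : A → ℝ => ∑ a, d a * q a (ξ a)) '' K) := by
      refine ⟨-B0, ?_⟩
      rintro v ⟨ξ, hξ, rfl⟩
      have : ∀ a, d a * (-B0) ≤ d a * q a (ξ a) := fun a =>
        mul_le_mul_of_nonneg_left (hq_lb a (ξ a) (hξ.1 a)) (hd.1 a)
      calc -B0 = (∑ a, d a) * (-B0) := by rw [hd.2, one_mul]
        _ = ∑ a, d a * (-B0) := by rw [Finset.sum_mul]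
        _ ≤ ∑ a, d a * q a (ξ a) := Finset.sum_le_sum fun a _ => this a
    have hmem : (fun a => qinv a u) ∈ K :=
      ⟨fun a => hqinv_nonneg a u (hu.1 a), hu.2⟩
    refine le_trans (csInf_le hbdd ⟨_, hmem, rfl⟩) ?_
    calc ∑ a, d a * q a (qinv a u) ≤ ∑ a, d a * u :=
          Finset.sum_le_sum fun a _ =>
            mul_le_mul_of_nonneg_left (h_q_qinv a u (hu.1 a)) (hd.1 a)
      _ = (∑ a, d a) * u := by rw [Finset.sum_mul]
      _ = u := by rw [hd.2, one_mul]
  -- simplex in A is nonempty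
  have hΔAne : (stdSimplex ℝ A).Nonempty := by
    refine ⟨fun _ => (Fintype.card A : ℝ)⁻¹, fun a => by positivity, ?_⟩
    rw [Finset.sum_const, nsmul_eq_mul]
    field_simp
    rw [Finset.card_univ]
  refine le_antisymm ?_ ?_
  · -- sSup ≤ sInf T
    refine csSup_le (hΔAne.image _) ?_
    rintro v ⟨d, hd, rfl⟩
    exact le_csInf hTne fun u hu => hF_le d hd u hu
  · -- sInf T ≤ sSup : separation argument
    set Cs : Set (A → ℝ) := {y | ∃ ξ ∈ K, ∀ a, q a (ξ a) ≤ y a} with hCs_def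
    set Bs : Set (A → ℝ) := {y | ∀ a, y a < ustar} with hBs_def
    have hCne : Cs.Nonempty := ⟨fun a => q a 0, 0, hK0, fun a => le_refl _⟩
    have hBne : Bs.Nonempty := ⟨fun _ => ustar - 1, fun a => by norm_num⟩
    have hBeq : Bs = ⋂ a, (fun y : A → ℝ => y a) ⁻¹' Set.Iio ustar := by
      ext y; simp [hBs_def]
    have hBopen : IsOpen Bs := by
      rw [hBeq]
      exact isOpen_iInter_of_finite fun a => isOpen_Iio.preimage (continuous_apply a)
    have hBconv : Convex ℝ Bs := by
      rw [hBeq]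
      exact convex_iInter fun a =>
        convex_halfSpace_lt (⟨fun x y => rfl, fun c x => rfl⟩ : IsLinearMap ℝ fun y : A → ℝ => y a) _
    have hCconv : Convex ℝ Cs := by
      rintro y1 ⟨ξ1, hξ1, hy1⟩ y2 ⟨ξ2, hξ2, hy2⟩ t s ht hs hts
      refine ⟨t • ξ1 + s • ξ2, ⟨?_, ?_⟩, ?_⟩
      · exact fun a => add_nonneg (mul_nonneg ht (hξ1.1 a)) (mul_nonneg hs (hξ2.1 a))
      · have : ∑ a, (t • ξ1 + s • ξ2) a = t * ∑ a, ξ1 a + s * ∑ a, ξ2 a := by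
          simp [Finset.mul_sum, Finset.sum_add_distrib]
        rw [this]
        calc t * ∑ a, ξ1 a + s * ∑ a, ξ2 a ≤ t * κ + s * κ := by
              have h1 := mul_le_mul_of_nonneg_left hξ1.2 ht
              have h2 := mul_le_mul_of_nonneg_left hξ2.2 hs
              linarith
          _ = κ := by rw [← add_mul, hts, one_mul]
      · intro a
        have h1 : q a ((t • ξ1 + s • ξ2) a) ≤ t * q a (ξ1 a) + s * q a (ξ2 a) := by
          have : (t • ξ1 + s • ξ2) a = t * ξ1 a + s * ξ2 a := rfl
          rw [this]
          exact hq_cvx a (ξ1 a) (ξ2 a) t s (hξ1.1 a) (hξ2.1 a) ht hs hts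
        have h2 : t * q a (ξ1 a) ≤ t * y1 a := mul_le_mul_of_nonneg_left (hy1 a) ht
        have h3 : s * q a (ξ2 a) ≤ s * y2 a := mul_le_mul_of_nonneg_left (hy2 a) hs
        have : (t • y1 + s • y2) a = t * y1 a + s * y2 a := rfl
        rw [this]
        linarith
    have hdisj : Disjoint Bs Cs := by
      rw [Set.disjoint_left]
      rintro y hyB ⟨ξ, hξK, hξy⟩
      set u : ℝ := Finset.univ.sup' Finset.univ_nonempty (fun a => q a (ξ a)) with hu_def
      have hqu : ∀ a, q a (ξ a) ≤ u := by
        intro a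
        rw [hu_def]
        exact Finset.le_sup' (fun a => q a (ξ a)) (Finset.mem_univ a)
      have huT : u ∈ T := by
        constructor
        · intro a
          obtain ⟨p, ⟨hpΔ, _⟩, hpe⟩ := hq_att a (ξ a) (hξK.1 a)
          exact ⟨p, hpΔ, hpe ▸ hqu a⟩
        · have : ∀ a, qinv a u ≤ ξ a := by
            intro a
            have hfeas : ∃ p ∈ stdSimplex ℝ S, lin a p ≤ q a (ξ a) := by
              obtain ⟨p, ⟨hpΔ, _⟩, hpe⟩ := hq_att a (ξ a) (hξK.1 a)
              exact ⟨p, hpΔ, hpe.le⟩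
            exact le_trans (hqinv_anti a (q a (ξ a)) u (hqu a) hfeas)
              (h_qinv_q a (ξ a) (hξK.1 a))
          calc ∑ a, qinv a u ≤ ∑ a, ξ a := Finset.sum_le_sum fun a _ => this a
            _ ≤ κ := hξK.2
      have h1 : ustar ≤ u := csInf_le hTbdd huT
      obtain ⟨a0, _, ha0⟩ := Finset.exists_mem_eq_sup' Finset.univ_nonempty (fun a => q a (ξ a))
      have h2 : u ≤ y a0 := by rw [hu_def, ha0]; exact hξy a0
      exact absurd (lt_of_le_of_lt (h1.trans h2) (hyB a0)) (lt_irrefl _)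
    obtain ⟨f, c, hfB, hfC⟩ := geometric_hahn_banach_open hBconv hBopen hCconv hdisj
    set e : A → (A → ℝ) := fun a j => if a = j then 1 else 0 with he_def
    have hf_eq : ∀ y : A → ℝ, f y = ∑ a, y a * f (e a) := by
      intro y
      conv_lhs => rw [pi_eq_sum_univ y]
      rw [map_sum]
      exact Finset.sum_congr rfl fun a _ => by rw [map_smul, smul_eq_mul]
    have hd_nonneg : ∀ a, 0 ≤ f (e a) := by
      intro a
      by_contra hneg
      push_neg at hneg
      set g : ℝ := f (fun _ => ustar - 1) with hg_def
      have hyB : ∀ t : ℝ, 0 ≤ t → ((fun _ : A => ustar - 1) - t • e a) ∈ Bs := by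
        intro t ht b
        have hind : 0 ≤ t * e a b := by
          rcases eq_or_ne a b with h | h <;> simp [he_def, h, ht]
        have : ((fun _ : A => ustar - 1) - t • e a) b = (ustar - 1) - t * e a b := rfl
        rw [this]; linarith
      have hval : ∀ t : ℝ, 0 ≤ t → g - t * f (e a) < c := by
        intro t ht
        have := hfB _ (hyB t ht)
        rwa [map_sub, map_smul, smul_eq_mul] at this
      set t0 : ℝ := max 0 ((c - g) / (-(f (e a)))) with ht0_def
      have ht0n : 0 ≤ t0 := le_max_left _ _
      have ht0l : (c - g) / (-(f (e a))) ≤ t0 := le_max_right _ _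
      have hpos : 0 < -(f (e a)) := by linarith
      have : c - g ≤ t0 * (-(f (e a))) := (div_le_iff₀ hpos).mp ht0l
      have := hval t0 ht0n
      nlinarith
    set W : ℝ := ∑ a, f (e a) with hW_def
    have hWnn : 0 ≤ W := Finset.sum_nonneg fun a _ => hd_nonneg a
    have hWpos : 0 < W := by
      rcases hWnn.lt_or_eq with h | h
      · exact h
      · exfalso
        have hall : ∀ a ∈ Finset.univ, f (e a) = 0 :=
          (Finset.sum_eq_zero_iff_of_nonneg fun a _ => hd_nonneg a).mp h.symm
        have hf0 : ∀ y, f y = 0 := fun y => by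
          rw [hf_eq y]
          exact Finset.sum_eq_zero fun a ha => by rw [hall a ha, mul_zero]
        obtain ⟨yB, hyB⟩ := hBne
        obtain ⟨yC, hyC⟩ := hCne
        have h1 := hfB yB hyB
        have h2 := hfC yC hyC
        rw [hf0 yB] at h1; rw [hf0 yC] at h2
        linarith
    have hcge : ustar * W ≤ c := by
      have key : ∀ ε : ℝ, 0 < ε → (ustar - ε) * W < c := by
        intro ε hε
        have hmem : (fun _ : A => ustar - ε) ∈ Bs := fun a => by show ustar - ε < ustar; linarith
        have := hfB _ hmem
        rw [hf_eq] at this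
        have heq : ∑ a, (ustar - ε) * f (e a) = (ustar - ε) * W := by
          rw [hW_def, Finset.mul_sum]
        rwa [heq] at this
      by_contra hcon
      push_neg at hcon
      have hεpos : 0 < (ustar * W - c) / (2 * W) := div_pos (by linarith) (by linarith)
      have := key _ hεpos
      have h2 : ((ustar * W - c) / (2 * W)) * W = (ustar * W - c) / 2 := by
        field_simp
      nlinarith
    have hkey : ∀ ξ ∈ K, ustar * W ≤ ∑ a, q a (ξ a) * f (e a) := by
      intro ξ hξ
      have hyC : (fun a => q a (ξ a)) ∈ Cs := ⟨ξ, hξ, fun a => le_refl _⟩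
      have := hfC _ hyC
      rw [hf_eq] at this
      linarith [hcge]
    -- the optimal d
    set d' : A → ℝ := fun a => f (e a) / W with hd'_def
    have hd'mem : d' ∈ stdSimplex ℝ A := by
      constructor
      · exact fun a => div_nonneg (hd_nonneg a) hWnn
      · show (∑ a, d' a) = 1
        simp only [hd'_def]
        rw [← Finset.sum_div, ← hW_def, div_self hWpos.ne']
    have hFd' : ustar ≤ sInf ((fun ξ : A → ℝ => ∑ a, d' a * q a (ξ a)) '' K) := by
      refine le_csInf ⟨_, ⟨0, hK0, rfl⟩⟩ ?_
      rintro v ⟨ξ, hξ, rfl⟩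
      have heq : ∑ a, d' a * q a (ξ a) = (∑ a, q a (ξ a) * f (e a)) / W := by
        rw [Finset.sum_div]
        refine Finset.sum_congr rfl fun a _ => ?_
        simp only [hd'_def]
        rw [div_mul_eq_mul_div, mul_comm]
      show ustar ≤ ∑ a, d' a * q a (ξ a)
      rw [heq, le_div_iff₀ hWpos]
      exact hkey ξ hξ
    have hbddA : BddAbove ((fun d : A → ℝ =>
        sInf ((fun ξ : A → ℝ => ∑ a, d a * q a (ξ a)) '' K)) '' stdSimplex ℝ A) := by
      refine ⟨u0, ?_⟩
      rintro v ⟨d, hd, rfl⟩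
      exact hF_le d hd u0 hu0T
    exact le_trans hFd' (le_csSup hbddA ⟨d', hd'mem, rfl⟩)
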